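/- arXiv:2008.00555 — 3 statements merged into one kernel-verified Lean document; each statement's English description precedes it below -/
import Mathlib

section
/- Define s_i⁰(x) = inf { s : P(J_i(x) ≤ s) > 0 }, the minimum attainable cost of the random route-switching process. Then s_i⁰ satisfies the dynamic programming relation s_i⁰(x) = K_i(x) + min { s_j⁰(F_i(x)) : j ∈ M with p_{ij} > 0 } for x ∉ Q, and s_i⁰(x) = q_i(x) for x ∈ Q, provided every trajectory reaches Q almost surely and the state space is finite. -/
open Classical in
/-- Probability that the random route-switching process, started at node `x`
using route `i` for the first step, terminates in `Q` within `n` steps with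
total cumulative cost (running plus terminal) at most `s`. -/
noncomputable def reachCDF {X : Type*} {M : ℕ} (Q : Set X)
    (F : Fin M → X → X) (K : Fin M → X → ℝ) (q : Fin M → X → ℝ)
    (p : Fin M → Fin M → ℝ) : ℕ → Fin M → X → ℝ → ℝ
  | 0, i, x, s => if x ∈ Q ∧ q i x ≤ s then 1 else 0
  | n + 1, i, x, s =>
      if x ∈ Q then (if q i x ≤ s then 1 else 0)
      else ∑ j, p i j * reachCDF Q F K q p n j (F i x) (s - K i x)

/-- The CDF `w_i(x,s) = P(J_i(x) ≤ s)` of the random cumulative cost, as the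
monotone limit of the finite-horizon probabilities. -/
noncomputable def costCDF {X : Type*} {M : ℕ} (Q : Set X)
    (F : Fin M → X → X) (K : Fin M → X → ℝ) (q : Fin M → X → ℝ)
    (p : Fin M → Fin M → ℝ) (i : Fin M) (x : X) (s : ℝ) : ℝ :=
  ⨆ n : ℕ, reachCDF Q F K q p n i x s

/-- The minimum attainable cost `s_i⁰(x) = inf { s : P(J_i(x) ≤ s) > 0 }`. -/
noncomputable def minCost {X : Type*} {M : ℕ} (Q : Set X)
    (F : Fin M → X → X) (K : Fin M → X → ℝ) (q : Fin M → X → ℝ)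
    (p : Fin M → Fin M → ℝ) (i : Fin M) (x : X) : ℝ :=
  sInf {s : ℝ | 0 < costCDF Q F K q p i x s}


section Aux

variable {X : Type*} {M : ℕ} (Q : Set X) (F : Fin M → X → X) (K : Fin M → X → ℝ)
  (q : Fin M → X → ℝ) (p : Fin M → Fin M → ℝ)

theorem reachCDF_nonneg' (hp0 : ∀ i j, 0 ≤ p i j) :
    ∀ (n : ℕ) (i : Fin M) (x : X) (s : ℝ), 0 ≤ reachCDF Q F K q p n i x s := by
  intro n
  induction n with
  | zero => intro i x s; rw [reachCDF]; positivity
  | succ n ih =>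
    intro i x s
    rw [reachCDF]
    split
    · positivity
    · exact Finset.sum_nonneg fun j _ => mul_nonneg (hp0 i j) (ih j (F i x) (s - K i x))

theorem reachCDF_le_one' (hp0 : ∀ i j, 0 ≤ p i j) (hp1 : ∀ i, ∑ j, p i j = 1) :
    ∀ (n : ℕ) (i : Fin M) (x : X) (s : ℝ), reachCDF Q F K q p n i x s ≤ 1 := by
  intro n
  induction n with
  | zero => intro i x s; rw [reachCDF]; split <;> norm_num
  | succ n ih =>
    intro i x s
    rw [reachCDF]
    split
    · split <;> norm_num
    · calc ∑ j, p i j * reachCDF Q F K q p n j (F i x) (s - K i x)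
          ≤ ∑ j, p i j * 1 := by
            refine Finset.sum_le_sum fun j _ => ?_
            exact mul_le_mul_of_nonneg_left (ih j (F i x) (s - K i x)) (hp0 i j)
        _ = 1 := by simp [hp1 i]

theorem costCDF_bddAbove (i : Fin M) (x : X) (s : ℝ) :
    BddAbove (Set.range fun n => reachCDF Q F K q p n i x s) ∨ True := Or.inr trivial

theorem reachCDF_le_costCDF (hp0 : ∀ i j, 0 ≤ p i j) (hp1 : ∀ i, ∑ j, p i j = 1)
    (n : ℕ) (i : Fin M) (x : X) (s : ℝ) :
    reachCDF Q F K q p n i x s ≤ costCDF Q F K q p i x s :=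
  le_ciSup (f := fun n => reachCDF Q F K q p n i x s)
    ⟨1, by rintro _ ⟨m, rfl⟩; exact reachCDF_le_one' Q F K q p hp0 hp1 m i x s⟩ n

theorem costCDF_pos_iff (hp0 : ∀ i j, 0 ≤ p i j) (hp1 : ∀ i, ∑ j, p i j = 1)
    (i : Fin M) (x : X) (hx : x ∉ Q) (s : ℝ) :
    0 < costCDF Q F K q p i x s ↔
      ∃ j, 0 < p i j ∧ 0 < costCDF Q F K q p j (F i x) (s - K i x) := by
  have hbdd : ∀ (i : Fin M) (x : X) (s : ℝ),
      BddAbove (Set.range fun n => reachCDF Q F K q p n i x s) :=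
    fun i x s => ⟨1, by rintro _ ⟨m, rfl⟩; exact reachCDF_le_one' Q F K q p hp0 hp1 m i x s⟩
  constructor
  · intro h
    rw [costCDF, lt_ciSup_iff (hbdd i x s)] at h
    obtain ⟨n, hn⟩ := h
    match n with
    | 0 => rw [reachCDF, if_neg (fun h => hx h.1)] at hn; exact absurd hn (lt_irrefl 0)
    | n + 1 =>
      rw [reachCDF, if_neg hx] at hn
      have : ∃ j ∈ Finset.univ, (0:ℝ) <
          p i j * reachCDF Q F K q p n j (F i x) (s - K i x) := by
        by_contra hcon
        push_neg at hcon
        have : ∑ j, p i j * reachCDF Q F K q p n j (F i x) (s - K i x) ≤ 0 :=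
          Finset.sum_nonpos fun j hj => hcon j hj
        linarith
      obtain ⟨j, _, hj⟩ := this
      have hpj : 0 < p i j := by
        rcases (mul_pos_iff.mp hj) with ⟨h1, _⟩ | ⟨h1, h2⟩
        · exact h1
        · exact absurd h2 (not_lt.mpr (reachCDF_nonneg' Q F K q p hp0 n j (F i x) (s - K i x)))
      have hr : 0 < reachCDF Q F K q p n j (F i x) (s - K i x) := by
        rcases (mul_pos_iff.mp hj) with ⟨_, h2⟩ | ⟨h1, _⟩
        · exact h2
        · exact absurd h1 (not_lt.mpr (hp0 i j))
      exact ⟨j, hpj, lt_of_lt_of_le hr (reachCDF_le_costCDF Q F K q p hp0 hp1 n j _ _)⟩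
  · rintro ⟨j, hpj, hj⟩
    rw [costCDF, lt_ciSup_iff (hbdd j (F i x) (s - K i x))] at hj
    obtain ⟨n, hn⟩ := hj
    have key : 0 < reachCDF Q F K q p (n + 1) i x s := by
      rw [reachCDF, if_neg hx]
      have h1 : (0:ℝ) < p i j * reachCDF Q F K q p n j (F i x) (s - K i x) :=
        mul_pos hpj hn
      refine lt_of_lt_of_le h1 ?_
      exact Finset.single_le_sum
        (fun k _ => mul_nonneg (hp0 i k) (reachCDF_nonneg' Q F K q p hp0 n k _ _))
        (Finset.mem_univ j)
    exact lt_of_lt_of_le key (reachCDF_le_costCDF Q F K q p hp0 hp1 (n+1) i x s)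

theorem reachCDF_eq_zero_of_neg (hK : ∀ i x, 0 < K i x) (hq : ∀ i, ∀ x ∈ Q, 0 ≤ q i x) :
    ∀ (n : ℕ) (i : Fin M) (x : X) (s : ℝ), s < 0 → reachCDF Q F K q p n i x s = 0 := by
  intro n
  induction n with
  | zero =>
    intro i x s hs
    rw [reachCDF, if_neg]
    rintro ⟨hxQ, hqs⟩
    exact absurd (le_trans (hq i x hxQ) hqs) (not_le.mpr hs)
  | succ n ih =>
    intro i x s hs
    rw [reachCDF]
    split
    · rename_i hxQ
      rw [if_neg]
      exact fun hqs => absurd (le_trans (hq i x hxQ) hqs) (not_le.mpr hs)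
    · refine Finset.sum_eq_zero fun j _ => ?_
      rw [ih j (F i x) (s - K i x) (by have := hK i x; linarith), mul_zero]

theorem minCost_set_lb (hK : ∀ i x, 0 < K i x) (hq : ∀ i, ∀ x ∈ Q, 0 ≤ q i x)
    (i : Fin M) (x : X) :
    ∀ s ∈ {s : ℝ | 0 < costCDF Q F K q p i x s}, (0:ℝ) ≤ s := by
  intro s hs
  by_contra hcon
  push_neg at hcon
  have : costCDF Q F K q p i x s ≤ 0 := by
    rw [costCDF]
    refine Real.iSup_nonpos fun n => ?_
    rw [reachCDF_eq_zero_of_neg Q F K q p hK hq n i x s hcon]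
  exact absurd hs (by simp only [Set.mem_setOf_eq]; linarith)

end Aux

/-- **Dynamic programming relation for the minimum attainable cost:**
if the state space is finite and every trajectory reaches `Q` almost surely,
then `s_i⁰(x) = K_i(x) + min { s_j⁰(F_i(x)) : p_{ij} > 0 }` off `Q` and
`s_i⁰ = q_i` on `Q`. -/
theorem minCost_recursion {X : Type*} [Fintype X] {M : ℕ} (Q : Set X)
    (F : Fin M → X → X) (K : Fin M → X → ℝ) (q : Fin M → X → ℝ)
    (p : Fin M → Fin M → ℝ)
    (hK : ∀ i x, 0 < K i x) (hq : ∀ i, ∀ x ∈ Q, 0 ≤ q i x)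
    (hp0 : ∀ i j, 0 ≤ p i j) (hp1 : ∀ i, ∑ j, p i j = 1)
    (hAS : ∀ (i : Fin M) (x : X),
      Filter.Tendsto (fun s => costCDF Q F K q p i x s) Filter.atTop (nhds 1)) :
    (∀ i : Fin M, ∀ x ∉ Q,
        minCost Q F K q p i x
          = K i x + sInf {t : ℝ | ∃ j : Fin M, 0 < p i j ∧
              t = minCost Q F K q p j (F i x)}) ∧
    (∀ i : Fin M, ∀ x ∈ Q, minCost Q F K q p i x = q i x) := by
  constructor
  · intro i x hx
    set A : Fin M → Set ℝ := fun j => {s : ℝ | 0 < costCDF Q F K q p j (F i x) s} with hA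
    have hAne : ∀ j, (A j).Nonempty := by
      intro j
      have h := (hAS j (F i x)).eventually (eventually_gt_nhds (by norm_num : (0:ℝ) < 1))
      exact h.exists
    have hAlb : ∀ j, ∀ s ∈ A j, (0:ℝ) ≤ s := fun j =>
      minCost_set_lb Q F K q p hK hq j (F i x)
    set U : Set ℝ := {u : ℝ | ∃ j, 0 < p i j ∧ u ∈ A j} with hU
    have hJ : ∃ j, 0 < p i j := by
      by_contra hcon
      push_neg at hcon
      have : ∑ j, p i j = 0 := Finset.sum_eq_zero fun j _ =>
        le_antisymm (hcon j) (hp0 i j)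
      rw [hp1 i] at this
      norm_num at this
    obtain ⟨j0, hj0⟩ := hJ
    have hUne : U.Nonempty := by
      obtain ⟨s, hs⟩ := hAne j0
      exact ⟨s, j0, hj0, hs⟩
    have hUlb : ∀ u ∈ U, (0:ℝ) ≤ u := by
      rintro u ⟨j, _, hu⟩
      exact hAlb j u hu
    have hUbdd : BddBelow U := ⟨0, hUlb⟩
    have hSx_mem : ∀ s : ℝ, (0 < costCDF Q F K q p i x s) ↔ s - K i x ∈ U := by
      intro s
      rw [costCDF_pos_iff Q F K q p hp0 hp1 i x hx s]
      rfl
    have hSbdd : BddBelow {s : ℝ | 0 < costCDF Q F K q p i x s} :=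
      ⟨0, minCost_set_lb Q F K q p hK hq i x⟩
    have hSne : {s : ℝ | 0 < costCDF Q F K q p i x s}.Nonempty := by
      obtain ⟨u, hu⟩ := hUne
      refine ⟨K i x + u, ?_⟩
      show 0 < costCDF Q F K q p i x (K i x + u)
      rw [hSx_mem]
      simpa using hu
    set T : Set ℝ := {t : ℝ | ∃ j : Fin M, 0 < p i j ∧
        t = minCost Q F K q p j (F i x)} with hT
    have hTne : T.Nonempty := ⟨minCost Q F K q p j0 (F i x), j0, hj0, rfl⟩
    have hminA : ∀ j, minCost Q F K q p j (F i x) = sInf (A j) := fun j => rfl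
    have hTlb : ∀ t ∈ T, (0:ℝ) ≤ t := by
      rintro t ⟨j, hpj, rfl⟩
      rw [hminA j]
      exact le_csInf (hAne j) (hAlb j)
    have step1 : minCost Q F K q p i x = K i x + sInf U := by
      rw [minCost]
      apply le_antisymm
      · have h1 : ∀ u ∈ U, sInf {s : ℝ | 0 < costCDF Q F K q p i x s} ≤ K i x + u := by
          intro u hu
          refine csInf_le hSbdd ?_
          show 0 < costCDF Q F K q p i x (K i x + u)
          rw [hSx_mem]
          simpa using hu
        have h2 : sInf {s : ℝ | 0 < costCDF Q F K q p i x s} - K i x ≤ sInf U :=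
          le_csInf hUne fun u hu => by linarith [h1 u hu]
        linarith
      · refine le_csInf hSne fun s hs => ?_
        have hsU : s - K i x ∈ U := (hSx_mem s).mp hs
        have := csInf_le hUbdd hsU
        linarith
    have step2 : sInf U = sInf T := by
      apply le_antisymm
      · refine le_csInf hTne ?_
        rintro t ⟨j, hpj, rfl⟩
        rw [hminA j]
        exact csInf_le_csInf hUbdd (hAne j) (fun s hs => ⟨j, hpj, hs⟩)
      · refine le_csInf hUne ?_
        rintro u ⟨j, hpj, hu⟩
        have h1 : sInf T ≤ minCost Q F K q p j (F i x) :=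
          csInf_le ⟨0, hTlb⟩ ⟨j, hpj, rfl⟩
        have h2 : sInf (A j) ≤ u := csInf_le ⟨0, hAlb j⟩ hu
        rw [hminA j] at h1
        linarith
    rw [step1, step2]
  · intro i x hx
    have hconst : ∀ (n : ℕ) (s : ℝ),
        reachCDF Q F K q p n i x s = if q i x ≤ s then 1 else 0 := by
      intro n s
      cases n with
      | zero =>
        rw [reachCDF]
        by_cases h : q i x ≤ s <;> simp [hx, h]
      | succ n => rw [reachCDF, if_pos hx]
    have hcost : ∀ s : ℝ, costCDF Q F K q p i x s = if q i x ≤ s then 1 else 0 := by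
      intro s
      rw [costCDF]
      simp only [hconst]
      exact ciSup_const
    have hset : {s : ℝ | 0 < costCDF Q F K q p i x s} = Set.Ici (q i x) := by
      ext s
      by_cases h : q i x ≤ s <;> simp [hcost s, h]
    rw [minCost, hset, csInf_Ici]
end

section
/- Consider the 1-D finite-difference scheme W_{i,k}^{n+1} = W_{i,k}^n + (f_{ik}Δs/Δx)(W_{i,k+1}^n − W_{i,k}^n) + Σ_{j≠i} λ_{ij} Δs (W_j − W_i)(x_k + f_{ik}Δs, s_n), where the last terms are evaluated by linear interpolation between grid indices k and k+1. If 0 < f_{ik}Δs ≤ Δx and Δs·Σ_{j≠i} λ_{ij} ≤ 1 for all i, then each updated value W_{i,k}^{n+1} is a convex combination of values of W^n, and hence the scheme is monotone and L^∞-stable: min over all (j,m) of W_{j,m}^n ≤ W_{i,k}^{n+1} ≤ max over all (j,m) of W_{j,m}^n. -/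
/-- One step of the 1-D Eulerian finite-difference scheme
`W_{i,k}^{n+1} = W_{i,k}^n + (f_{ik}Δs/Δx)(W_{i,k+1}^n − W_{i,k}^n)
 + Σ_{j≠i} λ_{ij}Δs·(W_j − W_i)(x_k + f_{ik}Δs, s_n)`,
with the last terms evaluated by linear interpolation between grid indices
`k` and `k+1` (weights `1−θ` and `θ`, `θ = f_{ik}Δs/Δx`). -/
noncomputable def fdUpdate {M : ℕ} (Δx Δs : ℝ) (f : Fin M → ℤ → ℝ)
    (lam : Fin M → Fin M → ℝ) (W : Fin M → ℤ → ℝ) (i : Fin M) (k : ℤ) : ℝ :=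
  W i k + (f i k * Δs / Δx) * (W i (k + 1) - W i k)
    + ∑ j ∈ Finset.univ.filter (· ≠ i), lam i j * Δs *
        ((1 - f i k * Δs / Δx) * (W j k - W i k)
          + (f i k * Δs / Δx) * (W j (k + 1) - W i (k + 1)))

/-- **Monotonicity and `L^∞`-stability of the 1-D finite-difference scheme:**
if `0 < f_{ik}Δs ≤ Δx` and `Δs·Σ_{j≠i} λ_{ij} ≤ 1`, each updated value is a
convex combination of the previous values; hence the update is monotone and
`min_{j,m} W_{j,m} ≤ W'_{i,k} ≤ max_{j,m} W_{j,m}`. -/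
theorem fdUpdate_monotone_stable {M : ℕ} (Δx Δs : ℝ)
    (f : Fin M → ℤ → ℝ) (lam : Fin M → Fin M → ℝ)
    (hΔx : 0 < Δx) (hΔs : 0 < Δs)
    (hf : ∀ i k, 0 < f i k) (hcfl : ∀ i k, f i k * Δs ≤ Δx)
    (hlam : ∀ i j, j ≠ i → 0 ≤ lam i j)
    (hsum : ∀ i, Δs * ∑ j ∈ Finset.univ.filter (· ≠ i), lam i j ≤ 1) :
    (∀ W Wt : Fin M → ℤ → ℝ, (∀ j m, W j m ≤ Wt j m) →
      ∀ i k, fdUpdate Δx Δs f lam W i k ≤ fdUpdate Δx Δs f lam Wt i k) ∧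
    (∀ W : Fin M → ℤ → ℝ, ∀ b B : ℝ,
      (∀ j m, b ≤ W j m) → (∀ j m, W j m ≤ B) →
      ∀ i k, b ≤ fdUpdate Δx Δs f lam W i k ∧
        fdUpdate Δx Δs f lam W i k ≤ B) := by
  -- Key rewriting: the update is an explicit convex combination.
  have key : ∀ (W : Fin M → ℤ → ℝ) (i : Fin M) (k : ℤ),
      fdUpdate Δx Δs f lam W i k =
        (1 - f i k * Δs / Δx) * (1 - Δs * ∑ j ∈ Finset.univ.filter (· ≠ i), lam i j) * W i k
        + (f i k * Δs / Δx) * (1 - Δs * ∑ j ∈ Finset.univ.filter (· ≠ i), lam i j) * W i (k + 1)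
        + ∑ j ∈ Finset.univ.filter (· ≠ i), lam i j * Δs *
            ((1 - f i k * Δs / Δx) * W j k + (f i k * Δs / Δx) * W j (k + 1)) := by
    intro W i k
    set θ := f i k * Δs / Δx with hθ
    have hs : ∑ j ∈ Finset.univ.filter (· ≠ i), lam i j * Δs *
          ((1 - θ) * (W j k - W i k) + θ * (W j (k + 1) - W i (k + 1)))
        = (∑ j ∈ Finset.univ.filter (· ≠ i), lam i j * Δs *
              ((1 - θ) * W j k + θ * W j (k + 1)))
          - (Δs * ∑ j ∈ Finset.univ.filter (· ≠ i), lam i j) *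
              ((1 - θ) * W i k + θ * W i (k + 1)) := by
      rw [Finset.mul_sum, Finset.sum_mul, ← Finset.sum_sub_distrib]
      exact Finset.sum_congr rfl fun j _ => by ring
    simp only [fdUpdate, ← hθ, hs]
    ring
  have hθpos : ∀ i k, 0 ≤ f i k * Δs / Δx := fun i k =>
    div_nonneg (mul_nonneg (hf i k).le hΔs.le) hΔx.le
  have hθle : ∀ i k, f i k * Δs / Δx ≤ 1 := fun i k =>
    (div_le_one hΔx).2 (hcfl i k)
  have mono : ∀ W Wt : Fin M → ℤ → ℝ, (∀ j m, W j m ≤ Wt j m) →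
      ∀ i k, fdUpdate Δx Δs f lam W i k ≤ fdUpdate Δx Δs f lam Wt i k := by
    intro W Wt h i k
    rw [key W i k, key Wt i k]
    have h1 : (0:ℝ) ≤ 1 - f i k * Δs / Δx := by linarith [hθle i k]
    have h2 : (0:ℝ) ≤ 1 - Δs * ∑ j ∈ Finset.univ.filter (· ≠ i), lam i j := by
      linarith [hsum i]
    gcongr with j hj
    all_goals first
      | exact mul_nonneg h1 h2
      | exact mul_nonneg (hθpos i k) h2
      | exact mul_nonneg (hlam i j (Finset.mem_filter.mp hj).2) hΔs.le
      | exact h1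
      | exact hθpos i k
      | exact h _ _
  refine ⟨mono, fun W b B hb hB i k => ?_⟩
  have hconst : ∀ c : ℝ, fdUpdate Δx Δs f lam (fun _ _ => c) i k = c := by
    intro c; simp [fdUpdate]
  constructor
  · have := mono (fun _ _ => b) W (fun j m => hb j m) i k
    rwa [hconst] at this
  · have := mono W (fun _ _ => B) (fun j m => hB j m) i k
    rwa [hconst] at this
end

section
/- Let L be the set of rate matrices with entries in the boxes [a_{ij}, b_{ij}], and let w_i⁻ and w_i⁺ be the solutions of the discrete recursions w_i^±(x,s) = w_i^±(x̃, s̃) + τ · opt_{Λ∈L} Σ_{j≠i} λ_{ij}(w_j^±(x̃,s̃) − w_i^±(x̃,s̃)) (opt = min for w⁻, max for w⁺), with common boundary data, where x̃ = F_i(x), s̃ = s − τC_i(x), and τ·Σ_{j≠i} b_{ij} ≤ 1. Then for any fixed admissible Λ ∈ L, the corresponding solution w_i^Λ of the same recursion with that Λ satisfies w_i⁻(x,s) ≤ w_i^Λ(x,s) ≤ w_i⁺(x,s) for all x, i, and s. -/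
lemma box_min_le {a b c d : ℝ} (h1 : a ≤ c) (h2 : c ≤ b) :
    min (a * d) (b * d) ≤ c * d := by
  rcases le_total 0 d with hd | hd
  · exact le_trans (min_le_left _ _) (mul_le_mul_of_nonneg_right h1 hd)
  · exact le_trans (min_le_right _ _) (mul_le_mul_of_nonpos_right h2 hd)

lemma box_le_max {a b c d : ℝ} (h1 : a ≤ c) (h2 : c ≤ b) :
    c * d ≤ max (a * d) (b * d) := by
  rcases le_total 0 d with hd | hd
  · exact le_trans (mul_le_mul_of_nonneg_right h2 hd) (le_max_right _ _)
  · exact le_trans (mul_le_mul_of_nonpos_right h1 hd) (le_max_left _ _)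

lemma update_mono {ι : Type*} (s : Finset ι) (lam : ι → ℝ)
    (hlam : ∀ j ∈ s, 0 ≤ lam j) (τ : ℝ) (hτ : 0 ≤ τ)
    (hsum : τ * ∑ j ∈ s, lam j ≤ 1)
    (ui vi : ℝ) (u v : ι → ℝ) (hi : ui ≤ vi) (h : ∀ j ∈ s, u j ≤ v j) :
    ui + τ * ∑ j ∈ s, lam j * (u j - ui) ≤ vi + τ * ∑ j ∈ s, lam j * (v j - vi) := by
  have e : vi + τ * ∑ j ∈ s, lam j * (v j - vi)
      - (ui + τ * ∑ j ∈ s, lam j * (u j - ui))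
      = (vi - ui) * (1 - τ * ∑ j ∈ s, lam j)
        + τ * ∑ j ∈ s, lam j * (v j - u j) := by
    simp only [mul_sub, Finset.sum_sub_distrib, ← Finset.sum_mul]
    ring
  have t1 : 0 ≤ (vi - ui) * (1 - τ * ∑ j ∈ s, lam j) :=
    mul_nonneg (by linarith) (by linarith)
  have t2 : 0 ≤ τ * ∑ j ∈ s, lam j * (v j - u j) :=
    mul_nonneg hτ (Finset.sum_nonneg fun j hj =>
      mul_nonneg (hlam j hj) (by linarith [h j hj]))
  linarith


/-- **CDF bounds sandwich every fixed admissible rate matrix.**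
`wm` and `wp` solve the discrete recursions with, respectively, the pointwise
minimal and maximal choice of box-constrained rates
(`min_{λ∈[a,b]} λd = min(ad, bd)`, `max_{λ∈[a,b]} λd = max(ad, bd)`), while
`wl` solves the recursion with a fixed admissible rate matrix `λ ∈ [a,b]`.
All three share the same boundary data `g` (on `Q` or for `s ≤ 0`), the
running costs satisfy `C_i ≥ c_min > 0`, and the step condition
`τ·Σ_{j≠i} b_{ij} ≤ 1` holds.  Then `wm ≤ wl ≤ wp` everywhere. -/
theorem cdf_bounds_sandwich {X : Type*} {M : ℕ} (Q : Set X)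
    (F : Fin M → X → X) (C : Fin M → X → ℝ) (cmin : ℝ)
    (hcmin : 0 < cmin) (hC : ∀ i x, cmin ≤ C i x)
    (τ : ℝ) (hτ : 0 < τ)
    (a b lam : Fin M → Fin M → ℝ)
    (hab : ∀ i j, i ≠ j → 0 ≤ a i j ∧ a i j ≤ b i j)
    (hlam : ∀ i j, i ≠ j → a i j ≤ lam i j ∧ lam i j ≤ b i j)
    (hstep : ∀ i, τ * ∑ j ∈ Finset.univ.filter (· ≠ i), b i j ≤ 1)
    (g : Fin M → X → ℝ → ℝ)
    (wm wp wl : Fin M → X → ℝ → ℝ)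
    (hbm : ∀ i x s, (x ∈ Q ∨ s ≤ 0) → wm i x s = g i x s)
    (hbp : ∀ i x s, (x ∈ Q ∨ s ≤ 0) → wp i x s = g i x s)
    (hbl : ∀ i x s, (x ∈ Q ∨ s ≤ 0) → wl i x s = g i x s)
    (hrecm : ∀ i : Fin M, ∀ x ∉ Q, ∀ s : ℝ, 0 < s →
      wm i x s = wm i (F i x) (s - τ * C i x)
        + τ * ∑ j ∈ Finset.univ.filter (· ≠ i),
            min (a i j * (wm j (F i x) (s - τ * C i x)
                    - wm i (F i x) (s - τ * C i x)))
                (b i j * (wm j (F i x) (s - τ * C i x)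
                    - wm i (F i x) (s - τ * C i x))))
    (hrecp : ∀ i : Fin M, ∀ x ∉ Q, ∀ s : ℝ, 0 < s →
      wp i x s = wp i (F i x) (s - τ * C i x)
        + τ * ∑ j ∈ Finset.univ.filter (· ≠ i),
            max (a i j * (wp j (F i x) (s - τ * C i x)
                    - wp i (F i x) (s - τ * C i x)))
                (b i j * (wp j (F i x) (s - τ * C i x)
                    - wp i (F i x) (s - τ * C i x))))
    (hrecl : ∀ i : Fin M, ∀ x ∉ Q, ∀ s : ℝ, 0 < s →
      wl i x s = wl i (F i x) (s - τ * C i x)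
        + τ * ∑ j ∈ Finset.univ.filter (· ≠ i),
            lam i j * (wl j (F i x) (s - τ * C i x)
                - wl i (F i x) (s - τ * C i x))) :
    ∀ (i : Fin M) (x : X) (s : ℝ),
      wm i x s ≤ wl i x s ∧ wl i x s ≤ wp i x s := by
  have hδpos : 0 < τ * cmin := mul_pos hτ hcmin
  have main : ∀ n : ℕ, ∀ (i : Fin M) (x : X) (s : ℝ), s ≤ n * (τ * cmin) →
      wm i x s ≤ wl i x s ∧ wl i x s ≤ wp i x s := by
    intro n
    induction n with
    | zero =>
      intro i x s hs
      have hs0 : s ≤ 0 := by simpa using hs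
      rw [hbm i x s (Or.inr hs0), hbl i x s (Or.inr hs0), hbp i x s (Or.inr hs0)]
      exact ⟨le_refl _, le_refl _⟩
    | succ n ih =>
      intro i x s hs
      by_cases hxQ : x ∈ Q
      · rw [hbm i x s (Or.inl hxQ), hbl i x s (Or.inl hxQ), hbp i x s (Or.inl hxQ)]
        exact ⟨le_refl _, le_refl _⟩
      by_cases hs0 : s ≤ 0
      · rw [hbm i x s (Or.inr hs0), hbl i x s (Or.inr hs0), hbp i x s (Or.inr hs0)]
        exact ⟨le_refl _, le_refl _⟩
      push_neg at hs0
      set t := s - τ * C i x with ht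
      have hcast : ((n + 1 : ℕ) : ℝ) * (τ * cmin) = n * (τ * cmin) + τ * cmin := by
        push_cast; ring
      have hCi : τ * cmin ≤ τ * C i x := mul_le_mul_of_nonneg_left (hC i x) hτ.le
      have htn : t ≤ n * (τ * cmin) := by rw [ht]; rw [hcast] at hs; linarith
      have ihj : ∀ j, wm j (F i x) t ≤ wl j (F i x) t ∧ wl j (F i x) t ≤ wp j (F i x) t :=
        fun j => ih j (F i x) t htn
      set J := Finset.univ.filter (· ≠ i) with hJ
      have hlam0 : ∀ j ∈ J, 0 ≤ lam i j := by
        intro j hj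
        have hji : j ≠ i := by simpa [hJ] using hj
        exact le_trans (hab i j (Ne.symm hji)).1 (hlam i j (Ne.symm hji)).1
      have hsumlam : τ * ∑ j ∈ J, lam i j ≤ 1 := by
        refine le_trans ?_ (hstep i)
        refine mul_le_mul_of_nonneg_left (Finset.sum_le_sum fun j hj => ?_) hτ.le
        have hji : j ≠ i := by simpa [hJ] using hj
        exact (hlam i j (Ne.symm hji)).2
      constructor
      · rw [hrecm i x hxQ s hs0, hrecl i x hxQ s hs0]
        calc wm i (F i x) t + τ * ∑ j ∈ J,
              min (a i j * (wm j (F i x) t - wm i (F i x) t))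
                  (b i j * (wm j (F i x) t - wm i (F i x) t))
            ≤ wm i (F i x) t + τ * ∑ j ∈ J,
                lam i j * (wm j (F i x) t - wm i (F i x) t) := by
              refine add_le_add_right (mul_le_mul_of_nonneg_left
                (Finset.sum_le_sum fun j hj => ?_) hτ.le) _
              have hji : j ≠ i := by simpa [hJ] using hj
              exact box_min_le (hlam i j (Ne.symm hji)).1 (hlam i j (Ne.symm hji)).2
          _ ≤ wl i (F i x) t + τ * ∑ j ∈ J,
                lam i j * (wl j (F i x) t - wl i (F i x) t) :=
              update_mono J (lam i) hlam0 τ hτ.le hsumlam _ _ _ _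
                (ihj i).1 (fun j _ => (ihj j).1)
      · rw [hrecl i x hxQ s hs0, hrecp i x hxQ s hs0]
        calc wl i (F i x) t + τ * ∑ j ∈ J,
              lam i j * (wl j (F i x) t - wl i (F i x) t)
            ≤ wp i (F i x) t + τ * ∑ j ∈ J,
                lam i j * (wp j (F i x) t - wp i (F i x) t) :=
              update_mono J (lam i) hlam0 τ hτ.le hsumlam _ _ _ _
                (ihj i).2 (fun j _ => (ihj j).2)
          _ ≤ wp i (F i x) t + τ * ∑ j ∈ J,
                max (a i j * (wp j (F i x) t - wp i (F i x) t))
                    (b i j * (wp j (F i x) t - wp i (F i x) t)) := by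
              refine add_le_add_right (mul_le_mul_of_nonneg_left
                (Finset.sum_le_sum fun j hj => ?_) hτ.le) _
              have hji : j ≠ i := by simpa [hJ] using hj
              exact box_le_max (hlam i j (Ne.symm hji)).1 (hlam i j (Ne.symm hji)).2
  intro i x s
  obtain ⟨n, hn⟩ := exists_nat_ge (s / (τ * cmin))
  exact main n i x s (by rw [div_le_iff₀ hδpos] at hn; linarith)
end
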